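/- Let (X, d, μ) be a separable metric probability space and suppose v is a partial strong mode along the null sequence (r_n), i.e. liminf_{n→∞} μ(B(v,r_n))/M_{r_n} ≥ 1. Then every weak mode u of μ is also a partial strong mode along the same null sequence (r_n). -/

import Mathlib

open MeasureTheory Metric Filter Topology

/-- Ball-mass ratio with the conventions `c/0 = ∞` for `c > 0` and `0/0 = 1`. -/
noncomputable def mRatio (a b : ENNReal) : ENNReal :=
  if b = 0 then (if a = 0 then 1 else ⊤) else a / b

lemma mRatio_mul_le {a b c : ENNReal} (hac : a ≤ c) (hbc : b ≤ c) (hb : b ≠ ⊤) :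
    mRatio a b * mRatio b c ≤ mRatio a c := by
  unfold mRatio
  by_cases hc : c = 0
  · have ha0 : a = 0 := le_antisymm (hc ▸ hac) zero_le
    have hb0 : b = 0 := le_antisymm (hc ▸ hbc) zero_le
    simp [hc, ha0, hb0]
  · by_cases hb0 : b = 0
    · simp only [hb0, hc, if_true, if_false]
      rw [ENNReal.zero_div, mul_zero]
      exact zero_le
    · simp only [hb0, hc, if_false]
      rw [div_eq_mul_inv, div_eq_mul_inv, div_eq_mul_inv,
        mul_assoc, ← mul_assoc b⁻¹ b c⁻¹, ENNReal.inv_mul_cancel hb0 hb, one_mul]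

theorem stmt10 {X : Type*} [MetricSpace X] [TopologicalSpace.SeparableSpace X]
    [MeasurableSpace X] [BorelSpace X] (μ : Measure X) [IsProbabilityMeasure μ]
    (u v : X) (r : ℕ → ℝ) (hrpos : ∀ n, 0 < r n) (hr : Tendsto r atTop (𝓝 0))
    (hv : 1 ≤ Filter.liminf
        (fun n => mRatio (μ (ball v (r n))) (⨆ x : X, μ (ball x (r n)))) atTop)
    (hu : ∀ w : X, w ≠ u →
        1 ≤ Filter.liminf
          (fun s : ℝ => mRatio (μ (ball u s)) (μ (ball w s))) (𝓝[>] (0:ℝ))) :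
    1 ≤ Filter.liminf
      (fun n => mRatio (μ (ball u (r n))) (⨆ x : X, μ (ball x (r n)))) atTop := by
  by_cases huv : v = u
  · subst huv; exact hv
  rw [le_liminf_iff]
  intro b hb
  set c : ENNReal := b ^ ((1:ℝ)/2) with hcdef
  have hc1 : c < 1 := ENNReal.rpow_lt_one hb (by norm_num)
  have hcc : c * c = b := by
    rw [hcdef, ← ENNReal.rpow_add_of_nonneg _ _ (by norm_num) (by norm_num)]
    norm_num
  have hrt : Tendsto r atTop (𝓝[>] (0:ℝ)) :=
    tendsto_nhdsWithin_of_tendsto_nhds_of_eventually_within r hr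
      (Eventually.of_forall hrpos)
  have h1 : ∀ᶠ s in 𝓝[>] (0:ℝ), c < mRatio (μ (ball u s)) (μ (ball v s)) :=
    eventually_lt_of_lt_liminf (lt_of_lt_of_le hc1 (hu v huv))
  have h2 : ∀ᶠ n in atTop, c < mRatio (μ (ball v (r n))) (⨆ x : X, μ (ball x (r n))) :=
    eventually_lt_of_lt_liminf (lt_of_lt_of_le hc1 hv)
  filter_upwards [hrt.eventually h1, h2] with n h1n h2n
  calc b = c * c := hcc.symm
    _ < mRatio (μ (ball u (r n))) (μ (ball v (r n))) *
        mRatio (μ (ball v (r n))) (⨆ x : X, μ (ball x (r n))) := ENNReal.mul_lt_mul h1n h2n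
    _ ≤ mRatio (μ (ball u (r n))) (⨆ x : X, μ (ball x (r n))) :=
        mRatio_mul_le (le_iSup (fun x => μ (ball x (r n))) u)
          (le_iSup (fun x => μ (ball x (r n))) v) (measure_ne_top μ _)
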